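/- Fix γ ∈ (0,1). For every β with 0 < β ≤ min{2γ, 2(1−γ)} and β < 1, one has h(β) + f_A(β,γ) ≤ h(2γ(1−γ)) + f_A(2γ(1−γ), γ); that is, the function β ↦ h(β) + f_A(β,γ) on (0, min{2γ,2(1−γ)}] attains its maximum at β = 2γ(1−γ). -/

import Mathlib

/-- Binary entropy function (base-2 logs), with the convention `0 * log 0 = 0`. -/
noncomputable def binEnt (x : ℝ) : ℝ :=
  -(x * Real.logb 2 x) - (1 - x) * Real.logb 2 (1 - x)

/-- The spectral shape exponent of the accumulator:
`f_A(α,β) = α − h(β) + (1−α)·h((β−α/2)/(1−α))`. -/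
noncomputable def fA (α β : ℝ) : ℝ :=
  α - binEnt β + (1 - α) * binEnt ((β - α / 2) / (1 - α))

/-- The spectral shape exponent of the discrete derivative:
`f_D(α,β) = (1−α)·h(β/(2(1−α))) + α·h(β/(2α)) − h(α)`. -/
noncomputable def fD (α β : ℝ) : ℝ :=
  (1 - α) * binEnt (β / (2 * (1 - α))) + α * binEnt (β / (2 * α)) - binEnt α

lemma gibbs_term (p q : ℝ) (hp : 0 ≤ p) (hq : 0 < q) :
    p * Real.log q - p * Real.log p ≤ q - p := by
  rcases eq_or_lt_of_le hp with h | hp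
  · simp [← h, hq.le]
  · have h1 : Real.log (q / p) ≤ q / p - 1 :=
      Real.log_le_sub_one_of_pos (by positivity)
    have h2 : Real.log (q / p) = Real.log q - Real.log p := Real.log_div hq.ne' hp.ne'
    rw [h2] at h1
    have h3 := mul_le_mul_of_nonneg_left h1 hp.le
    have h4 : p * (q / p - 1) = q - p := by field_simp
    nlinarith [h3, h4]

lemma gibbs4 (p1 p2 p3 p4 q1 q2 q3 q4 : ℝ)
    (hp1 : 0 ≤ p1) (hp2 : 0 ≤ p2) (hp3 : 0 ≤ p3) (hp4 : 0 ≤ p4)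
    (hq1 : 0 < q1) (hq2 : 0 < q2) (hq3 : 0 < q3) (hq4 : 0 < q4)
    (hsum : p1 + p2 + p3 + p4 = q1 + q2 + q3 + q4) :
    -(p1 * Real.logb 2 p1 + p2 * Real.logb 2 p2 + p3 * Real.logb 2 p3 + p4 * Real.logb 2 p4) ≤
    -(p1 * Real.logb 2 q1 + p2 * Real.logb 2 q2 + p3 * Real.logb 2 q3 + p4 * Real.logb 2 q4) := by
  have hl2 : (0:ℝ) < Real.log 2 := Real.log_pos one_lt_two
  have t1 := gibbs_term p1 q1 hp1 hq1
  have t2 := gibbs_term p2 q2 hp2 hq2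
  have t3 := gibbs_term p3 q3 hp3 hq3
  have t4 := gibbs_term p4 q4 hp4 hq4
  have key : p1 * Real.log q1 + p2 * Real.log q2 + p3 * Real.log q3 + p4 * Real.log q4 ≤
      p1 * Real.log p1 + p2 * Real.log p2 + p3 * Real.log p3 + p4 * Real.log p4 := by linarith
  have expand : ∀ y z : ℝ, y * Real.logb 2 z = y * Real.log z / Real.log 2 := by
    intro y z; rw [Real.logb]; ring
  simp only [expand]
  rw [show -(p1 * Real.log p1 / Real.log 2 + p2 * Real.log p2 / Real.log 2 +
      p3 * Real.log p3 / Real.log 2 + p4 * Real.log p4 / Real.log 2) =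
      -((p1 * Real.log p1 + p2 * Real.log p2 + p3 * Real.log p3 + p4 * Real.log p4) / Real.log 2)
      from by ring,
    show -(p1 * Real.log q1 / Real.log 2 + p2 * Real.log q2 / Real.log 2 +
      p3 * Real.log q3 / Real.log 2 + p4 * Real.log q4 / Real.log 2) =
      -((p1 * Real.log q1 + p2 * Real.log q2 + p3 * Real.log q3 + p4 * Real.log q4) / Real.log 2)
      from by ring]
  exact neg_le_neg (div_le_div_of_nonneg_right key hl2.le)

lemma two_part (a b : ℝ) (ha : 0 ≤ a) (hb : 0 ≤ b) (hab : 0 < a + b) :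
    (a + b) * binEnt (a / (a + b)) =
      -(a * Real.logb 2 a) - b * Real.logb 2 b + (a + b) * Real.logb 2 (a + b) := by
  have h1 : 1 - a / (a + b) = b / (a + b) := by field_simp; ring
  have key : ∀ c : ℝ, 0 ≤ c → c * Real.logb 2 (c / (a + b)) =
      c * Real.logb 2 c - c * Real.logb 2 (a + b) := by
    intro c hc
    rcases eq_or_lt_of_le hc with h | hc
    · simp [← h]
    · rw [Real.logb_div hc.ne' hab.ne']; ring
  have hA : (a + b) * (a / (a + b)) = a := by field_simp
  have hB : (a + b) * (b / (a + b)) = b := by field_simp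
  unfold binEnt
  rw [h1]
  have e1 : (a + b) * (a / (a + b) * Real.logb 2 (a / (a + b)))
      = a * Real.logb 2 (a / (a + b)) := by rw [← mul_assoc, hA]
  have e2 : (a + b) * (b / (a + b) * Real.logb 2 (b / (a + b)))
      = b * Real.logb 2 (b / (a + b)) := by rw [← mul_assoc, hB]
  have ea := key a ha
  have eb := key b hb
  nlinarith [e1, e2, ea, eb]

lemma key_eq (γ β : ℝ) (hβ0 : 0 < β) (hβ1 : β < 1) (h1 : β / 2 ≤ γ) (h2 : β / 2 ≤ 1 - γ) :
    binEnt β + fA β γ =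
      -(β * Real.logb 2 (β / 2)) - (γ - β / 2) * Real.logb 2 (γ - β / 2)
        - (1 - γ - β / 2) * Real.logb 2 (1 - γ - β / 2) - binEnt γ := by
  have ha : (0:ℝ) ≤ γ - β / 2 := by linarith
  have hb : (0:ℝ) ≤ 1 - γ - β / 2 := by linarith
  have hab : (γ - β / 2) + (1 - γ - β / 2) = 1 - β := by ring
  have hab0 : (0:ℝ) < (γ - β / 2) + (1 - γ - β / 2) := by linarith
  have htp := two_part (γ - β / 2) (1 - γ - β / 2) ha hb hab0
  rw [hab] at htp
  have hlogβ : Real.logb 2 (β / 2) = Real.logb 2 β - 1 := by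
    rw [Real.logb_div hβ0.ne' two_ne_zero, Real.logb_self_eq_one (by norm_num)]
  unfold fA
  rw [htp, hlogβ]
  unfold binEnt
  ring

/-- For fixed `γ ∈ (0,1)`, the function `β ↦ h(β) + f_A(β,γ)` on `(0, min{2γ,2(1−γ)}]`
attains its maximum at `β = 2γ(1−γ)`. -/
theorem entropy_add_fA_max (γ : ℝ) (hγ0 : 0 < γ) (hγ1 : γ < 1)
    (β : ℝ) (hβ0 : 0 < β) (hβu : β ≤ min (2 * γ) (2 * (1 - γ))) (hβ1 : β < 1) :
    binEnt β + fA β γ ≤ binEnt (2 * γ * (1 - γ)) + fA (2 * γ * (1 - γ)) γ := by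
  have hβγ : β ≤ 2 * γ := le_trans hβu (min_le_left _ _)
  have hβγ' : β ≤ 2 * (1 - γ) := le_trans hβu (min_le_right _ _)
  have hγ1' : (0:ℝ) < 1 - γ := by linarith
  have hc0 : (0:ℝ) < 2 * γ * (1 - γ) := by positivity
  have hc1 : 2 * γ * (1 - γ) < 1 := by nlinarith [sq_nonneg (2 * γ - 1)]
  have e1 := key_eq γ β hβ0 hβ1 (by linarith) (by linarith)
  have e2 := key_eq γ (2 * γ * (1 - γ)) hc0 hc1 (by nlinarith) (by nlinarith)
  rw [show (2 * γ * (1 - γ) / 2 : ℝ) = γ * (1 - γ) from by ring,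
      show (γ - γ * (1 - γ) : ℝ) = γ * γ from by ring,
      show (1 - γ - γ * (1 - γ) : ℝ) = (1 - γ) * (1 - γ) from by ring] at e2
  have hg := gibbs4 (β / 2) (β / 2) (γ - β / 2) (1 - γ - β / 2)
      (γ * (1 - γ)) (γ * (1 - γ)) (γ * γ) ((1 - γ) * (1 - γ))
      (by linarith) (by linarith) (by linarith) (by linarith)
      (by positivity) (by positivity) (by positivity) (by positivity)
      (by ring)
  have l1 : Real.logb 2 (γ * (1 - γ)) = Real.logb 2 γ + Real.logb 2 (1 - γ) :=
    Real.logb_mul hγ0.ne' hγ1'.ne'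
  have l2 : Real.logb 2 (γ * γ) = Real.logb 2 γ + Real.logb 2 γ :=
    Real.logb_mul hγ0.ne' hγ0.ne'
  have l3 : Real.logb 2 ((1 - γ) * (1 - γ)) = Real.logb 2 (1 - γ) + Real.logb 2 (1 - γ) :=
    Real.logb_mul hγ1'.ne' hγ1'.ne'
  rw [l1, l2, l3] at hg
  rw [e1, e2, l1, l2, l3]
  have hlogβ2 : Real.logb 2 (β / 2) = Real.logb 2 (β / 2) := rfl
  linarith [hg]
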